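/- The map sending an n-dimensional subspace P of R^m to its de-traced projection matrix 𝒫̄ = 𝒫 − (n/m)I_m is an isometric embedding of the Grassmannian G(m,n) with chordal distance into a sphere of radius sqrt(n(m−n)/m) centered at the origin in the space of traceless symmetric m×m matrices (of dimension (m+1)m/2 − 1), with d_c(P,Q) = (1/√2)·‖𝒫̄ − 𝒬̄‖. -/

import Mathlib

open Matrix

/-- The subspace of traceless symmetric real `m × m` matrices. -/
def tracelessSym (m : ℕ) : Submodule ℝ (Matrix (Fin m) (Fin m) ℝ) where
  carrier := {M | Mᵀ = M ∧ Matrix.trace M = 0}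
  add_mem' := by
    rintro a b ⟨ha1, ha2⟩ ⟨hb1, hb2⟩
    exact ⟨by simp [Matrix.transpose_add, ha1, hb1], by simp [ha2, hb2]⟩
  zero_mem' := by simp
  smul_mem' := by
    rintro c a ⟨ha1, ha2⟩
    exact ⟨by simp [Matrix.transpose_smul, ha1], by simp [ha2]⟩

/-- The subspace of symmetric real `m × m` matrices. -/
def symSub (m : ℕ) : Submodule ℝ (Matrix (Fin m) (Fin m) ℝ) where
  carrier := {M | Mᵀ = M}
  add_mem' := by
    rintro a b ha hb
    simp only [Set.mem_setOf_eq] at *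
    simp [Matrix.transpose_add, ha, hb]
  zero_mem' := by simp
  smul_mem' := by
    rintro c a ha
    simp only [Set.mem_setOf_eq] at *
    simp [Matrix.transpose_smul, ha]

noncomputable def symEquiv (m : ℕ) :
    symSub m ≃ₗ[ℝ] ({p : Fin m × Fin m // p.1 ≤ p.2} → ℝ) where
  toFun M := fun p => (M : Matrix (Fin m) (Fin m) ℝ) p.1.1 p.1.2
  map_add' M N := rfl
  map_smul' c M := rfl
  invFun f := ⟨Matrix.of (fun i j =>
      if h : i ≤ j then f ⟨(i, j), h⟩ else f ⟨(j, i), le_of_not_ge h⟩), by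
    show _ᵀ = _
    ext i j
    simp only [Matrix.transpose_apply, Matrix.of_apply]
    rcases le_or_gt i j with h | h
    · rcases le_or_gt j i with h' | h'
      · cases le_antisymm h h'
        rfl
      · rw [dif_neg (not_le.mpr h'), dif_pos h]
    · rw [dif_pos h.le, dif_neg (not_le.mpr h)]⟩
  left_inv M := by
    ext i j
    simp only [Matrix.of_apply]
    split_ifs with h
    · rfl
    · conv_rhs => rw [← M.2]
      rfl
  right_inv f := by
    ext ⟨⟨i, j⟩, h⟩
    simp [h]

theorem card_le_pairs (m : ℕ) :
    Fintype.card {p : Fin m × Fin m // p.1 ≤ p.2} = m * (m + 1) / 2 := by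
  have e : {p : Fin m × Fin m // p.1 ≤ p.2} ≃ Σ j : Fin m, Fin (j.1 + 1) :=
    { toFun := fun p => ⟨p.1.2, ⟨p.1.1.1, Nat.lt_succ_of_le p.2⟩⟩
      invFun := fun x => ⟨(⟨x.2.1, lt_of_lt_of_le x.2.2 x.1.2⟩, x.1),
        by exact Nat.lt_succ_iff.mp x.2.2⟩
      left_inv := fun p => by
        rcases p with ⟨⟨i, j⟩, h⟩; rfl
      right_inv := fun x => by
        rcases x with ⟨j, i⟩; rfl }
  rw [Fintype.card_congr e, Fintype.card_sigma]
  simp only [Fintype.card_fin]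
  rw [Fin.sum_univ_eq_sum_range (fun i => i + 1)]
  have h2 : (∑ i ∈ Finset.range m, (i + 1)) * 2 = m * (m + 1) := by
    rw [Finset.sum_add_distrib, add_mul, Finset.sum_range_id_mul_two]
    cases m with
    | zero => simp
    | succ k =>
      simp only [Nat.add_sub_cancel, Finset.sum_const, Finset.card_range, smul_eq_mul,
        mul_one]
      ring
  omega

theorem finrank_symSub (m : ℕ) :
    Module.finrank ℝ (symSub m) = m * (m + 1) / 2 := by
  rw [(symEquiv m).finrank_eq, Module.finrank_pi, card_le_pairs]

theorem finrank_tracelessSym (m : ℕ) (hm : 0 < m) :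
    Module.finrank ℝ (tracelessSym m) = m * (m + 1) / 2 - 1 := by
  classical
  set f : symSub m →ₗ[ℝ] ℝ :=
    (Matrix.traceLinearMap (Fin m) ℝ ℝ).comp (symSub m).subtype with hf
  have hmap : tracelessSym m = (LinearMap.ker f).map (symSub m).subtype := by
    apply le_antisymm
    · rintro M ⟨h1, h2⟩
      exact ⟨⟨M, h1⟩, h2, rfl⟩
    · rintro M ⟨⟨N, hN⟩, h2, rfl⟩
      exact ⟨hN, h2⟩
  have hsurj : LinearMap.range f = ⊤ := by
    rw [LinearMap.range_eq_top]
    intro x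
    refine ⟨(x / m) • ⟨(1 : Matrix (Fin m) (Fin m) ℝ), by show (1 : Matrix (Fin m) (Fin m) ℝ)ᵀ = 1; exact Matrix.transpose_one⟩, ?_⟩
    show Matrix.trace ((x / m) • (1 : Matrix (Fin m) (Fin m) ℝ)) = x
    rw [Matrix.trace_smul, Matrix.trace_one, Fintype.card_fin, smul_eq_mul]
    field_simp
  have hrk := f.finrank_range_add_finrank_ker
  rw [hsurj, finrank_top, Module.finrank_self, finrank_symSub] at hrk
  rw [hmap, Submodule.finrank_map_subtype_eq]
  omega

theorem grassmannian_embedding {m n : ℕ} (hm : 0 < m) (hn : 1 ≤ n) (hnm : n ≤ m)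
    (P Q : Matrix (Fin m) (Fin m) ℝ)
    (hPsym : Pᵀ = P) (hPidem : P * P = P) (hPtr : Matrix.trace P = (n : ℝ))
    (hQsym : Qᵀ = Q) (hQidem : Q * Q = Q) (hQtr : Matrix.trace Q = (n : ℝ)) :
    (P - ((n : ℝ) / m) • 1) ∈ tracelessSym m ∧
    Module.finrank ℝ (tracelessSym m) = m * (m + 1) / 2 - 1 ∧
    Matrix.trace ((P - ((n : ℝ) / m) • 1)ᵀ * (P - ((n : ℝ) / m) • 1)) =
      (n : ℝ) * ((m : ℝ) - n) / m ∧
    (n : ℝ) - Matrix.trace (P * Q) =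
      (1 / 2) * Matrix.trace
        (((P - ((n : ℝ) / m) • 1) - (Q - ((n : ℝ) / m) • 1))ᵀ *
          ((P - ((n : ℝ) / m) • 1) - (Q - ((n : ℝ) / m) • 1))) := by
  have hm' : (m : ℝ) ≠ 0 := Nat.cast_ne_zero.mpr hm.ne'
  have hPQ : Matrix.trace (Q * P) = Matrix.trace (P * Q) := Matrix.trace_mul_comm Q P
  refine ⟨⟨?_, ?_⟩, finrank_tracelessSym m hm, ?_, ?_⟩
  · simp [Matrix.transpose_sub, Matrix.transpose_smul, hPsym]
  · simp only [Matrix.trace_sub, Matrix.trace_smul, Matrix.trace_one, Fintype.card_fin, smul_eq_mul, hPtr]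
    field_simp
    ring
  · rw [Matrix.transpose_sub, Matrix.transpose_smul, Matrix.transpose_one, hPsym]
    rw [Matrix.sub_mul, Matrix.mul_sub, Matrix.mul_sub]
    simp only [Matrix.smul_mul, Matrix.mul_smul, Matrix.one_mul, Matrix.mul_one,
      Matrix.trace_sub, Matrix.trace_smul, smul_smul, smul_eq_mul,
      hPidem, hPtr, Matrix.trace_one, Fintype.card_fin]
    field_simp
    ring
  · have hdiff : (P - ((n : ℝ) / m) • 1) - (Q - ((n : ℝ) / m) • 1) = P - Q := by
      abel
    rw [hdiff, Matrix.transpose_sub, hPsym, hQsym]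
    rw [Matrix.sub_mul, Matrix.mul_sub, Matrix.mul_sub]
    simp only [Matrix.trace_sub, hPidem, hQidem, hPtr, hQtr, hPQ]
    ring
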